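/- Let q be a power of 2 and let m ≥ 2 be an integer with gcd(q-1, m(m-1)) = 1. Then for every d ∈ F_q, the number of monic polynomials of degree m in F_q[x] with discriminant equal to d is exactly q^(m-1). -/

import Mathlib

open Polynomial
open scoped Classical

/-- The discriminant of a polynomial `f` of degree `m ≥ 2` over a field `F`, computed in an
algebraic closure via the standard formula
`disc(f) = (-1)^(m(m-1)/2) · a_m^(m-2) · ∏_i f'(α_i)`, where `a_m` is the leading coefficient
and the `α_i` are the roots of `f` (with multiplicity) in the algebraic closure; this equals
`a_m^(2m-2) · ∏_{i<j} (α_i - α_j)^2`.  For `f` of degree at most 1 it is defined to be `1`. -/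
noncomputable def polyDisc {F : Type*} [Field F] (f : F[X]) : AlgebraicClosure F :=
  if f.natDegree ≤ 1 then 1
  else
    (-1) ^ (f.natDegree * (f.natDegree - 1) / 2) *
      algebraMap F (AlgebraicClosure F) f.leadingCoeff ^ (f.natDegree - 2) *
      (Multiset.map (fun a => ((derivative f).map (algebraMap F (AlgebraicClosure F))).eval a)
        (f.map (algebraMap F (AlgebraicClosure F))).roots).prod

/-- The Möbius function on polynomials over a field: `μ f = (-1)^k` if `f` is squarefree
with `k` (distinct) monic irreducible factors, and `μ f = 0` otherwise. -/
noncomputable def polyMu {F : Type*} [Field F] (f : F[X]) : ℤ :=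
  if Squarefree f then (-1) ^ {π : F[X] | π.Monic ∧ Irreducible π ∧ π ∣ f}.ncard else 0

/-- `f` has factorization type `λ` (a partition of `m`): `f` is a product of distinct monic
irreducible polynomials whose degrees form the multiset of parts of `λ`.  The set
`S_{λ,F}` of monic squarefree polynomials of factorization type `λ` is
`{f | hasFactorizationType f λ}`. -/
def hasFactorizationType {F : Type*} [Field F] (f : F[X]) {m : ℕ} (lam : m.Partition) : Prop :=
  ∃ s : Finset F[X], (∀ π ∈ s, π.Monic ∧ Irreducible π) ∧ (∏ π ∈ s, π) = f ∧
    Multiset.map natDegree s.val = lam.parts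

section Aux

variable {F : Type*} [Field F] [Fintype F]

/-! ### Counting infrastructure -/

lemma finite_degLE (n : ℕ) : {f : F[X] | f.natDegree ≤ n}.Finite := by
  apply Set.Finite.of_finite_image (f := fun f (i : Fin (n+1)) => f.coeff i)
  · exact Set.toFinite _
  · intro f hf g hg h
    ext i
    by_cases hi : i ≤ n
    · exact congrFun h ⟨i, Nat.lt_succ_of_le hi⟩
    · rw [coeff_eq_zero_of_natDegree_lt (lt_of_le_of_lt hf (lt_of_not_ge hi)),
        coeff_eq_zero_of_natDegree_lt (lt_of_le_of_lt hg (lt_of_not_ge hi))]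

lemma finite_subset_degLE (n : ℕ) (S : Set F[X]) (h : ∀ f ∈ S, f.natDegree ≤ n) : S.Finite :=
  (finite_degLE n).subset h

lemma ncard_monic (n : ℕ) :
    {f : F[X] | f.Monic ∧ f.natDegree = n}.ncard = Fintype.card F ^ n := by
  classical
  have hinj : Set.InjOn (fun f (i : Fin n) => f.coeff i) {f : F[X] | f.Monic ∧ f.natDegree = n} := by
    intro f hf g hg h
    ext i
    rcases lt_trichotomy i n with hi | hi | hi
    · exact congrFun h ⟨i, hi⟩
    · subst hi
      rw [← hf.2, hf.1.coeff_natDegree, hf.2, ← hg.2, hg.1.coeff_natDegree]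
    · rw [coeff_eq_zero_of_natDegree_lt (hf.2 ▸ hi), coeff_eq_zero_of_natDegree_lt (hg.2 ▸ hi)]
  have himg : (fun f (i : Fin n) => f.coeff i) '' {f : F[X] | f.Monic ∧ f.natDegree = n} =
      Set.univ := by
    apply Set.eq_univ_of_forall
    intro c
    by_cases hn : n = 0
    · subst hn
      refine ⟨1, ⟨monic_one, natDegree_one⟩, ?_⟩
      ext i; exact absurd i.2 (Nat.not_lt_zero _)
    · set p : F[X] := ∑ i : Fin n, C (c i) * X ^ (i : ℕ) with hp
      have hpd : p.degree < (n : ℕ) := by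
        apply lt_of_le_of_lt (degree_sum_le _ _)
        rw [Finset.sup_lt_iff (by exact_mod_cast WithBot.bot_lt_coe n)]
        intro i _
        exact lt_of_le_of_lt (degree_C_mul_X_pow_le _ _) (by exact_mod_cast i.2)
      have hdeg : (X ^ n + p).degree = (n : WithBot ℕ) := by
        rw [degree_add_eq_left_of_degree_lt (by rwa [degree_X_pow]), degree_X_pow]
      refine ⟨X ^ n + p, ⟨monic_X_pow_add hpd, natDegree_eq_of_degree_eq_some hdeg⟩, ?_⟩
      ext i
      simp only [coeff_add, coeff_X_pow, hp, finset_sum_coeff, coeff_C_mul]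
      rw [if_neg (Nat.ne_of_lt i.2)]
      have : ∀ j : Fin n, (c j * if (i:ℕ) = (j:ℕ) then (1:F) else 0) = if j = i then c j else 0 := by
        intro j
        by_cases h : j = i
        · subst h; simp
        · rw [if_neg (fun hh => h (Fin.ext hh.symm)), if_neg h, mul_zero]
      rw [Finset.sum_congr rfl (fun j _ => this j), Finset.sum_ite_eq' Finset.univ i c,
        if_pos (Finset.mem_univ i), zero_add]
  calc {f : F[X] | f.Monic ∧ f.natDegree = n}.ncard
      = ((fun f (i : Fin n) => f.coeff i) '' {f : F[X] | f.Monic ∧ f.natDegree = n}).ncard :=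
        (Set.ncard_image_of_injOn hinj).symm
    _ = (Set.univ : Set (Fin n → F)).ncard := by rw [himg]
    _ = Fintype.card F ^ n := by
        rw [Set.ncard_univ, Nat.card_eq_fintype_card, Fintype.card_fun]
        simp

lemma ncard_biUnion' {ι α : Type*} (s : Finset ι) (t : ι → Set α)
    (hf : ∀ i ∈ s, (t i).Finite)
    (hd : ∀ i ∈ s, ∀ j ∈ s, i ≠ j → Disjoint (t i) (t j)) :
    (⋃ i ∈ s, t i).ncard = ∑ i ∈ s, (t i).ncard := by
  classical
  induction s using Finset.induction_on with
  | empty => simp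
  | insert a s' hx ih =>
    rw [Finset.sum_insert hx]
    have hU : (⋃ i ∈ insert a s', t i) = t a ∪ ⋃ i ∈ s', t i := by
      simp [Set.biUnion_insert]
    have h2 : (⋃ i ∈ s', t i).Finite :=
      Set.Finite.biUnion s'.finite_toSet (fun i hi => hf i (Finset.mem_insert_of_mem hi))
    have hdisj : Disjoint (t a) (⋃ i ∈ s', t i) := by
      apply Set.disjoint_iUnion_right.2
      intro i
      apply Set.disjoint_iUnion_right.2
      intro hi
      exact hd a (Finset.mem_insert_self a s') i (Finset.mem_insert_of_mem hi)
        (fun h => hx (h ▸ hi))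
    rw [hU, Set.ncard_union_eq hdisj (hf a (Finset.mem_insert_self a s')) h2,
      ih (fun i hi => hf i (Finset.mem_insert_of_mem hi))
        (fun i hi j hj hij => hd i (Finset.mem_insert_of_mem hi) j (Finset.mem_insert_of_mem hj) hij)]

lemma ncard_prod' {α β : Type*} (s : Set α) (t : Set β) :
    (s ×ˢ t).ncard = s.ncard * t.ncard := by
  rw [← Nat.card_coe_set_eq, ← Nat.card_coe_set_eq, ← Nat.card_coe_set_eq,
    Nat.card_congr (Equiv.Set.prod s t), Nat.card_prod]

/-! ### Unique decomposition f = u * v ^ 2 -/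

omit [Fintype F] in
lemma monic_prime_factor {x : F[X]} (hx : x ≠ 0) (hxu : ¬ IsUnit x) :
    ∃ p : F[X], Prime p ∧ p.Monic ∧ p ∣ x := by
  obtain ⟨i, hi, hix⟩ := WfDvdMonoid.exists_irreducible_factor hxu hx
  have hip : Prime i := (UniqueFactorizationMonoid.irreducible_iff_prime).1 hi
  refine ⟨normalize i, ?_, monic_normalize hip.ne_zero, (normalize_dvd_iff).2 hix⟩
  exact (associated_normalize i).prime hip

omit [Fintype F] in
lemma prime_natDegree_pos {p : F[X]} (hp : Prime p) (hm : p.Monic) : 0 < p.natDegree := by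
  rcases Nat.eq_zero_or_pos p.natDegree with h | h
  · exact absurd (hm.isUnit_iff.2 ((hm.natDegree_eq_zero).1 h)) hp.not_unit
  · exact h

omit [Fintype F] in
lemma exists_unique_decomp : ∀ n : ℕ, ∀ f : F[X], f.Monic → f.natDegree = n →
    ∃! p : F[X] × F[X], p.1.Monic ∧ Squarefree p.1 ∧ p.2.Monic ∧ f = p.1 * p.2 ^ 2 := by
  intro n
  induction n using Nat.strong_induction_on with
  | _ n ih =>
  intro f hf hdeg
  by_cases hsf : Squarefree f
  · refine ⟨(f, 1), ⟨hf, hsf, monic_one, by ring⟩, ?_⟩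
    rintro ⟨u, v⟩ ⟨hu, hsu, hv, heq⟩
    have hv1 : v = 1 := by
      by_contra hne
      obtain ⟨p, hp, hpm, hpv⟩ := monic_prime_factor hv.ne_zero
        (fun h => hne (hv.isUnit_iff.1 h))
      have : p * p ∣ f := by
        rw [heq, sq]
        exact Dvd.dvd.mul_left (mul_dvd_mul hpv hpv) u
      exact hp.not_unit (hsf p this)
    subst hv1
    have : u = f := by rw [heq]; ring
    simp [this]
  · have hne : f ≠ 0 := hf.ne_zero
    have h' : ∃ x, x * x ∣ f ∧ ¬ IsUnit x := by
      rw [Squarefree] at hsf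
      push_neg at hsf
      exact hsf
    obtain ⟨x, hxf, hxu⟩ := h'
    have hx0 : x ≠ 0 := by rintro rfl; exact hne (zero_dvd_iff.1 (by simpa using hxf))
    obtain ⟨p, hp, hpm, hpx⟩ := monic_prime_factor hx0 hxu
    have hp2f : p ^ 2 ∣ f := by rw [sq]; exact dvd_trans (mul_dvd_mul hpx hpx) hxf
    obtain ⟨g, hg⟩ := hp2f
    have hp2m : (p ^ 2).Monic := hpm.pow 2
    have hgm : g.Monic := hp2m.of_mul_monic_left (hg ▸ hf)
    have hg0 : g ≠ 0 := hgm.ne_zero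
    have hdegg : g.natDegree < n := by
      have hpd := prime_natDegree_pos hp hpm
      have : f.natDegree = (p ^ 2).natDegree + g.natDegree :=
        hg ▸ natDegree_mul (pow_ne_zero 2 hp.ne_zero) hg0
      rw [hdeg] at this
      have h2 : (p ^ 2).natDegree = 2 * p.natDegree := natDegree_pow p 2
      omega
    obtain ⟨⟨u, w⟩, ⟨hu, hsu, hw, hgw⟩, huniq⟩ := ih g.natDegree hdegg g hgm rfl
    refine ⟨(u, p * w), ⟨hu, hsu, hpm.mul hw, by rw [hg, hgw]; ring⟩, ?_⟩
    rintro ⟨u', v'⟩ ⟨hu', hsu', hv', heq'⟩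
    have hpv' : p ∣ v' := by
      by_contra hnd
      have h1 : p ^ 2 ∣ v' ^ 2 * u' := by
        have : p ^ 2 ∣ u' * v' ^ 2 := heq' ▸ ⟨g, hg⟩
        rwa [mul_comm] at this
      have hnd2 : ¬ p ∣ v' ^ 2 := fun h => hnd (hp.dvd_of_dvd_pow h)
      have h2 : p ^ 2 ∣ u' := hp.pow_dvd_of_dvd_mul_left 2 hnd2 h1
      exact hp.not_unit (hsu' p (by rw [← sq]; exact h2))
    obtain ⟨w', hw'⟩ := hpv'
    have hw'm : w'.Monic := hpm.of_mul_monic_left (hw' ▸ hv')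
    have hgu : g = u' * w' ^ 2 := by
      have hcan : p ^ 2 * g = p ^ 2 * (u' * w' ^ 2) := by
        rw [← hg, heq', hw']; ring
      exact mul_left_cancel₀ (pow_ne_zero 2 hp.ne_zero) hcan
    have := huniq (u', w') ⟨hu', hsu', hw'm, hgu⟩
    have hu'' : u' = u := congrArg Prod.fst this
    have hw'' : w' = w := congrArg Prod.snd this
    simp [hu'', hw'' ▸ hw', Prod.ext_iff]

/-! ### The squarefree count -/

def SFset (F : Type*) [Field F] (k : ℕ) : Set F[X] :=
  {u | u.Monic ∧ Squarefree u ∧ u.natDegree = k}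

lemma key_identity (n : ℕ) :
    Fintype.card F ^ n = ∑ k ∈ Finset.range (n / 2 + 1),
      (SFset F (n - 2 * k)).ncard * Fintype.card F ^ k := by
  classical
  set T : ℕ → Set F[X] := fun k =>
    (fun p : F[X] × F[X] => p.1 * p.2 ^ 2) ''
      ((SFset F (n - 2 * k)) ×ˢ {v : F[X] | v.Monic ∧ v.natDegree = k}) with hT
  have hmemT : ∀ k, k ∈ Finset.range (n / 2 + 1) → ∀ f ∈ T k,
      f.Monic ∧ f.natDegree = n := by
    rintro k hk f ⟨⟨u, v⟩, ⟨⟨hu, hsu, hud⟩, ⟨hv, hvd⟩⟩, rfl⟩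
    have h2k : 2 * k ≤ n := by
      have := Finset.mem_range.1 hk; omega
    constructor
    · exact hu.mul (hv.pow 2)
    · rw [natDegree_mul hu.ne_zero (pow_ne_zero 2 hv.ne_zero), natDegree_pow, hud, hvd]
      omega
  have hinjT : ∀ k, Set.InjOn (fun p : F[X] × F[X] => p.1 * p.2 ^ 2)
      ((SFset F (n - 2 * k)) ×ˢ {v : F[X] | v.Monic ∧ v.natDegree = k}) := by
    intro k p hp p' hp' heq
    obtain ⟨⟨hu, hsu, hud⟩, hv, hvd⟩ := hp
    obtain ⟨⟨hu', hsu', hud'⟩, hv', hvd'⟩ := hp'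
    have hmono : (p.1 * p.2 ^ 2).Monic := hu.mul (hv.pow 2)
    exact (exists_unique_decomp _ _ hmono rfl).unique ⟨hu, hsu, hv, rfl⟩
      ⟨hu', hsu', hv', heq⟩
  have hfinT : ∀ k ∈ Finset.range (n / 2 + 1), (T k).Finite := by
    intro k hk
    apply Set.Finite.image
    apply Set.Finite.prod
    · exact finite_subset_degLE (n - 2*k) _ (fun f hf => hf.2.2.le)
    · exact finite_subset_degLE k _ (fun f hf => hf.2.le)
  have hdisjT : ∀ i ∈ Finset.range (n / 2 + 1), ∀ j ∈ Finset.range (n / 2 + 1),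
      i ≠ j → Disjoint (T i) (T j) := by
    intro i hi j hj hij
    rw [Set.disjoint_left]
    rintro f ⟨⟨u, v⟩, ⟨⟨hu, hsu, hud⟩, ⟨hv, hvd⟩⟩, rfl⟩
      ⟨⟨u', v'⟩, ⟨⟨hu', hsu', hud'⟩, ⟨hv', hvd'⟩⟩, heq⟩
    have hmono : (u * v ^ 2).Monic := hu.mul (hv.pow 2)
    have := (exists_unique_decomp _ _ hmono rfl).unique
      (⟨hu', hsu', hv', heq.symm⟩ : (u', v').1.Monic ∧ Squarefree (u', v').1 ∧ (u', v').2.Monic ∧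
        u * v ^ 2 = (u', v').1 * (u', v').2 ^ 2) ⟨hu, hsu, hv, rfl⟩
    have : v' = v := congrArg Prod.snd this
    rw [← hvd, ← hvd', this] at hij
    exact hij rfl
  have hcover : {f : F[X] | f.Monic ∧ f.natDegree = n} = ⋃ k ∈ Finset.range (n / 2 + 1), T k := by
    apply Set.Subset.antisymm
    · rintro f ⟨hf, hfd⟩
      obtain ⟨⟨u, v⟩, ⟨hu, hsu, hv, heq⟩, -⟩ := exists_unique_decomp f.natDegree f hf rfl
      have hd : f.natDegree = u.natDegree + 2 * v.natDegree := by
        rw [heq, natDegree_mul hu.ne_zero (pow_ne_zero 2 hv.ne_zero), natDegree_pow]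
      refine Set.mem_biUnion (Finset.mem_range.2 (by omega : v.natDegree < n / 2 + 1)) ?_
      exact ⟨(u, v), ⟨⟨hu, hsu, show u.natDegree = n - 2 * v.natDegree by omega⟩, ⟨hv, rfl⟩⟩,
        heq.symm⟩
    · intro f hf
      simp only [Set.mem_iUnion] at hf
      obtain ⟨k, hk, hfk⟩ := hf
      exact hmemT k hk f hfk
  have := ncard_biUnion' (Finset.range (n / 2 + 1)) T hfinT hdisjT
  rw [← hcover, ncard_monic] at this
  rw [this]
  apply Finset.sum_congr rfl
  intro k hk
  rw [hT]
  rw [Set.ncard_image_of_injOn (hinjT k), ncard_prod', ncard_monic]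

lemma sf_count_aux (n : ℕ) (hn : 2 ≤ n) :
    Fintype.card F ^ n = (SFset F n).ncard + Fintype.card F ^ (n - 1) := by
  have h1 := key_identity (F := F) n
  have h2 := key_identity (F := F) (n - 2)
  set q := Fintype.card F with hq
  rw [Finset.sum_range_succ'] at h1
  have hdiv : n / 2 = (n - 2) / 2 + 1 := by omega
  have hre : ∑ k ∈ Finset.range (n / 2), (SFset F (n - 2 * (k + 1))).ncard * q ^ (k + 1)
      = q * ∑ k ∈ Finset.range ((n - 2) / 2 + 1), (SFset F ((n - 2) - 2 * k)).ncard * q ^ k := by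
    rw [hdiv, Finset.mul_sum]
    apply Finset.sum_congr rfl
    intro k hk
    have hh : n - 2 * (k + 1) = (n - 2) - 2 * k := by omega
    rw [hh]; ring
  rw [hre, ← h2] at h1
  have hp : q * q ^ (n - 2) = q ^ (n - 1) := by
    rw [← pow_succ']; congr 1; omega
  rw [hp] at h1
  simp at h1; omega

lemma nonsf_count (n : ℕ) (hn : 2 ≤ n) :
    {f : F[X] | f.Monic ∧ f.natDegree = n ∧ ¬ Squarefree f}.ncard
      = Fintype.card F ^ (n - 1) := by
  have hsplit : {f : F[X] | f.Monic ∧ f.natDegree = n} =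
      {f : F[X] | f.Monic ∧ f.natDegree = n ∧ ¬ Squarefree f} ∪ SFset F n := by
    ext f
    simp only [Set.mem_setOf_eq, Set.mem_union, SFset]
    tauto
  have hdisj : Disjoint {f : F[X] | f.Monic ∧ f.natDegree = n ∧ ¬ Squarefree f} (SFset F n) := by
    rw [Set.disjoint_left]
    rintro f ⟨-, -, hnsf⟩ ⟨-, hsf, -⟩
    exact hnsf hsf
  have hf1 : {f : F[X] | f.Monic ∧ f.natDegree = n ∧ ¬ Squarefree f}.Finite :=
    finite_subset_degLE n _ (fun f hf => hf.2.1.le)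
  have hf2 : (SFset F n).Finite := finite_subset_degLE n _ (fun f hf => hf.2.2.le)
  have := ncard_monic (F := F) n
  rw [hsplit, Set.ncard_union_eq hdisj hf1 hf2] at this
  have h2 := sf_count_aux (F := F) n hn
  omega

/-! ### Discriminant lemmas -/

omit [Fintype F] in
lemma polyDisc_eq_prod [CharP F 2] {f : F[X]} (hf : f.Monic) (hm : 2 ≤ f.natDegree) :
    polyDisc f =
      (Multiset.map (fun a => ((derivative f).map (algebraMap F (AlgebraicClosure F))).eval a)
        (f.map (algebraMap F (AlgebraicClosure F))).roots).prod := by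
  haveI : CharP (AlgebraicClosure F) 2 :=
    charP_of_injective_algebraMap (algebraMap F (AlgebraicClosure F)).injective 2
  unfold polyDisc
  rw [if_neg (by omega), hf.leadingCoeff, map_one, one_pow, mul_one,
    CharTwo.neg_eq (1 : AlgebraicClosure F), one_pow, one_mul]

lemma polyDisc_zero_iff [CharP F 2] {f : F[X]} (hf : f.Monic) (hm : 2 ≤ f.natDegree) :
    polyDisc f = 0 ↔ ¬ Squarefree f := by
  set K := AlgebraicClosure F
  set i : F →+* K := algebraMap F K with hi
  haveI : CharP K 2 := charP_of_injective_algebraMap i.injective 2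
  have hg0 : f.map i ≠ 0 := (hf.map i).ne_zero
  rw [polyDisc_eq_prod hf hm]
  constructor
  · intro h0 hsf
    have hsep : f.Separable := (PerfectField.separable_iff_squarefree).2 hsf
    obtain ⟨A, B, hAB⟩ := hsep
    obtain ⟨z, hz, hz0⟩ := Multiset.mem_map.1 (Multiset.prod_eq_zero_iff.1 h0)
    have hroot : (f.map i).eval z = 0 := ((mem_roots hg0).1 hz)
    have := congrArg (fun p : F[X] => (p.map i).eval z) hAB
    simp only [Polynomial.map_add, Polynomial.map_mul, eval_add, eval_mul,
      Polynomial.map_one, eval_one, hroot, hz0, mul_zero, zero_add, add_zero] at this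
    exact one_ne_zero (this.symm.trans (mul_eq_zero_of_right _ hz0))
  · intro hsf
    have h' : ∃ x : F[X], x * x ∣ f ∧ ¬ IsUnit x := by
      rw [Squarefree] at hsf; push_neg at hsf; exact hsf
    obtain ⟨x, hxf, hxu⟩ := h'
    have hx0 : x ≠ 0 := by
      rintro rfl; exact hf.ne_zero (zero_dvd_iff.1 (by simpa using hxf))
    obtain ⟨p, hp, hpm, hpx⟩ := monic_prime_factor hx0 hxu
    have hp2f : p ^ 2 ∣ f := by rw [sq]; exact dvd_trans (mul_dvd_mul hpx hpx) hxf
    obtain ⟨h, hfh⟩ := hp2f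
    have hpdeg : (p.map i).degree ≠ 0 := by
      have h1 : p.natDegree ≠ 0 := (prime_natDegree_pos hp hpm).ne'
      rw [degree_map, degree_eq_natDegree hp.ne_zero]
      exact_mod_cast h1 ∘ (by exact_mod_cast ·)
    obtain ⟨α, hα⟩ := IsAlgClosed.exists_root (p.map i) hpdeg
    have hα0 : (p.map i).eval α = 0 := hα
    have hgα : (f.map i).eval α = 0 := by
      rw [hfh, Polynomial.map_mul, Polynomial.map_pow, eval_mul, eval_pow, hα0]
      ring
    have hαroots : α ∈ (f.map i).roots := (mem_roots hg0).2 hgα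
    have hder : (derivative (f.map i)).eval α = 0 := by
      rw [hfh, Polynomial.map_mul, Polynomial.map_pow, derivative_mul, derivative_pow]
      have h2 : (2 : K[X]) = 0 := by
        have : ((2 : ℕ) : K[X]) = 0 := by
          rw [Nat.cast_ofNat]
          exact_mod_cast CharTwo.two_eq_zero
        exact_mod_cast this
      simp [hα0, h2]
    apply Multiset.prod_eq_zero
    refine Multiset.mem_map.2 ⟨α, hαroots, ?_⟩
    rw [← derivative_map, hder]

end Aux
section Frob
variable {F : Type*} [Field F] [Fintype F]

lemma polyDisc_mem_range [CharP F 2] {f : F[X]} (hf : f.Monic) (hm : 2 ≤ f.natDegree) :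
    ∃ c : F, polyDisc f = algebraMap F (AlgebraicClosure F) c := by
  classical
  set K := AlgebraicClosure F
  set i : F →+* K := algebraMap F K with hidef
  haveI : CharP K 2 := charP_of_injective_algebraMap i.injective 2
  haveI : ExpChar K 2 := ExpChar.prime Nat.prime_two
  obtain ⟨n, hn⟩ : ∃ n : ℕ, Fintype.card F = 2 ^ n := by
    obtain ⟨p, hp⟩ := CharP.exists F
    obtain ⟨nn, hpp, hcard⟩ := FiniteField.card F p
    have : p = 2 := by
      haveI := hp
      exact CharP.eq F hp ‹CharP F 2›
    exact ⟨nn, by rw [hcard, this]⟩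
  set q := Fintype.card F with hq
  set φ : K →+* K := iterateFrobenius K 2 n with hφ
  have hφ_def : ∀ x : K, φ x = x ^ q := by
    intro x; rw [hφ, iterateFrobenius_def, ← hn]
  have hφi : ∀ c : F, φ (i c) = i c := by
    intro c
    rw [hφ_def, ← map_pow, hq, FiniteField.pow_card]
  -- z is fixed by φ
  set z := polyDisc f with hz
  have hfix : φ z = z := by
    rw [hz, polyDisc_eq_prod hf hm]
    have hφcomp : φ.comp i = i := RingHom.ext hφi
    have hsplits : Splits (f.map i) := IsAlgClosed.splits _
    have hrootsmap : (f.map i).roots.map φ = (f.map i).roots := by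
      have h1 : ((f.map i).map φ).roots = (f.map i).roots.map φ := hsplits.roots_map φ
      rw [Polynomial.map_map, hφcomp] at h1
      exact h1.symm
    rw [map_multiset_prod, Multiset.map_map]
    conv_rhs => rw [← hrootsmap, Multiset.map_map]
    apply congrArg
    apply Multiset.map_congr rfl
    intro α hα
    show φ (((derivative f).map i).eval α) = ((derivative f).map i).eval (φ α)
    calc φ (((derivative f).map i).eval α)
        = (((derivative f).map i).map φ).eval (φ α) := by
          conv_rhs => rw [Polynomial.eval_map, Polynomial.eval₂_at_apply]
      _ = ((derivative f).map i).eval (φ α) := by rw [Polynomial.map_map, hφcomp]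
  -- an element fixed by x ↦ x^q lies in the image of F
  have hzq : z ^ q = z := by rw [← hφ_def, hfix]
  by_contra hcon
  push_neg at hcon
  set P : K[X] := X ^ q - X with hP
  have hq2 : 2 ≤ q := by rw [hq]; exact Fintype.one_lt_card
  have hPdeg : P.natDegree = q := by
    rw [hP]
    have : (X : K[X]).degree < (X ^ q : K[X]).degree := by
      rw [degree_X, degree_X_pow]; exact_mod_cast by omega
    rw [natDegree_sub_eq_left_of_natDegree_lt (by simpa using (by omega : 1 < q))]
    · exact natDegree_X_pow q
  have hP0 : P ≠ 0 := by
    intro h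
    have := hPdeg
    rw [h, natDegree_zero] at this
    omega
  -- the finset of roots
  set S : Finset K := Finset.univ.image i with hS
  have hScard : S.card = q := by
    rw [hS, Finset.card_image_of_injective _ i.injective, Finset.card_univ, hq]
  have hSsub : ∀ y ∈ insert z S, y ∈ P.roots.toFinset := by
    intro y hy
    rw [Multiset.mem_toFinset, mem_roots hP0]
    rcases Finset.mem_insert.1 hy with rfl | hyS
    · simp only [hP, IsRoot, eval_sub, eval_pow, eval_X]
      rw [hzq, sub_self]
    · obtain ⟨c, -, rfl⟩ := Finset.mem_image.1 hyS
      have hc : (i c) ^ q = i c := by rw [← map_pow, hq, FiniteField.pow_card]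
      simp only [hP, IsRoot, eval_sub, eval_pow, eval_X]
      rw [hc, sub_self]
  have hcard1 : (insert z S).card = q + 1 := by
    rw [Finset.card_insert_of_notMem, hScard]
    intro hzS
    obtain ⟨c, -, hc⟩ := Finset.mem_image.1 hzS
    exact hcon c hc.symm
  have hle : (insert z S).card ≤ P.roots.toFinset.card :=
    Finset.card_le_card (fun y hy => hSsub y hy)
  have : P.roots.toFinset.card ≤ q := by
    calc P.roots.toFinset.card ≤ Multiset.card P.roots := P.roots.toFinset_card_le
      _ ≤ P.natDegree := P.card_roots'
      _ = q := hPdeg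
  omega

end Frob
section Scale
variable {F : Type*} [Field F] [Fintype F]

noncomputable def pscale {F : Type*} [Field F] (a : F) (f : F[X]) : F[X] :=
  C (a ^ f.natDegree)⁻¹ * f.comp (C a * X)

omit [Fintype F] in
lemma pscale_natDegree {a : F} (ha : a ≠ 0) (f : F[X]) :
    (pscale a f).natDegree = f.natDegree := by
  unfold pscale
  rw [natDegree_C_mul (inv_ne_zero (pow_ne_zero _ ha)), natDegree_comp,
    natDegree_C_mul_X a ha, mul_one]

omit [Fintype F] in
lemma pscale_monic {a : F} (ha : a ≠ 0) {f : F[X]} (hf : f.Monic) : (pscale a f).Monic := by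
  unfold pscale
  have hcomp : (f.comp (C a * X)).leadingCoeff = a ^ f.natDegree := by
    rw [leadingCoeff_comp (by rw [natDegree_C_mul_X a ha]; omega), hf.leadingCoeff, one_mul]
    congr 1
    rw [leadingCoeff_mul, leadingCoeff_C, leadingCoeff_X, mul_one]
  have : (C (a ^ f.natDegree)⁻¹ * f.comp (C a * X)).leadingCoeff = 1 := by
    rw [leadingCoeff_mul, leadingCoeff_C, hcomp, inv_mul_cancel₀ (pow_ne_zero _ ha)]
  exact this

omit [Fintype F] in
lemma pscale_pscale {a b : F} (ha : a ≠ 0) (hb : b ≠ 0) (f : F[X]) :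
    pscale a (pscale b f) = pscale (b * a) f := by
  have hdeg : (pscale b f).natDegree = f.natDegree := pscale_natDegree hb f
  unfold pscale
  unfold pscale at hdeg
  rw [hdeg]
  rw [mul_comp, C_comp, comp_assoc]
  have hcc : (C b * X).comp (C a * X) = C (b * a) * X := by
    rw [mul_comp, C_comp, X_comp, C_mul, mul_assoc]
  rw [hcc, mul_pow, mul_inv]
  simp only [C_mul]
  ring

omit [Fintype F] in
lemma pscale_one (f : F[X]) : pscale 1 f = f := by
  unfold pscale
  simp

omit [Fintype F] in
lemma pscale_polyDisc [CharP F 2] {a : F} (ha : a ≠ 0) {f : F[X]} (hf : f.Monic)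
    (hm : 2 ≤ f.natDegree) :
    polyDisc (pscale a f) =
      ((algebraMap F (AlgebraicClosure F) a)⁻¹) ^ ((f.natDegree - 1) * f.natDegree) *
        polyDisc f := by
  classical
  set K := AlgebraicClosure F
  set i : F →+* K := algebraMap F K with hidef
  set m := f.natDegree with hmdef
  set aK : K := i a with haK
  have haK0 : aK ≠ 0 := fun h => ha (i.injective (by rwa [map_zero]))
  set g : K[X] := f.map i with hg
  have hgm : g.Monic := hf.map i
  have hgd : g.natDegree = m := natDegree_map i
  have hsplits : Splits g := IsAlgClosed.splits _
  have hcard : Multiset.card g.roots = m := by rw [splits_iff_card_roots.1 hsplits, hgd]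
  set R : Multiset K := g.roots with hR
  -- the map of the scaled polynomial is the monic product over scaled roots
  have hmapscale : (pscale a f).map i =
      ((R.map (fun α => aK⁻¹ * α)).map (fun β => X - C β)).prod := by
    unfold pscale
    rw [Polynomial.map_mul, map_C, map_inv₀, map_pow, Polynomial.map_comp, Polynomial.map_mul,
      map_C, Polynomial.map_X, ← hg]
    conv_lhs => rw [hsplits.eq_prod_roots_of_monic hgm]
    rw [multiset_prod_comp, Multiset.map_map, ← hR]
    have hterm : ∀ α : K, (X - C α).comp (C aK * X) = C aK * (X - C (aK⁻¹ * α)) := by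
      intro α
      rw [sub_comp, X_comp, C_comp, mul_sub, ← C_mul, mul_inv_cancel_left₀ haK0]
    have : R.map (fun α => (X - C α).comp (C aK * X)) =
        R.map (fun α => C aK * (X - C (aK⁻¹ * α))) := Multiset.map_congr rfl (fun α _ => hterm α)
    rw [show ((fun p : K[X] => p.comp (C aK * X)) ∘ fun α => X - C α) =
        (fun α : K => (X - C α).comp (C aK * X)) from rfl, this]
    rw [Multiset.prod_map_mul, Multiset.map_const', Multiset.prod_replicate, hcard]
    rw [Multiset.map_map, ← mul_assoc, ← C_pow, ← C_mul]
    have hconst : ((i a ^ f.natDegree)⁻¹ * aK ^ m : K) = 1 := by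
      rw [← haK, ← hmdef, inv_mul_cancel₀ (pow_ne_zero _ haK0)]
    rw [hconst, C_1, one_mul]
    rfl
  have hscaled_roots : ((pscale a f).map i).roots = R.map (fun α => aK⁻¹ * α) := by
    rw [hmapscale, roots_multiset_prod_X_sub_C]
  -- derivative evaluation
  have hder : ∀ α : K,
      ((derivative (pscale a f)).map i).eval (aK⁻¹ * α) =
        aK⁻¹ ^ (m - 1) * ((derivative f).map i).eval α := by
    intro α
    unfold pscale
    rw [derivative_C_mul, derivative_comp, derivative_C_mul_X]
    rw [Polynomial.map_mul, map_C, map_inv₀, map_pow, Polynomial.map_mul, map_C,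
      Polynomial.map_comp, Polynomial.map_mul, map_C, Polynomial.map_X]
    rw [eval_mul, eval_C, eval_mul, eval_C, eval_comp, eval_mul, eval_C, eval_X]
    rw [← haK, ← hmdef, mul_inv_cancel_left₀ haK0]
    have hmm : m = (m - 1) + 1 := by omega
    calc (aK ^ m)⁻¹ * (aK * eval α (map i (derivative f)))
        = aK⁻¹ ^ (m - 1) * ((aK⁻¹ * aK) * eval α (map i (derivative f))) := by
          rw [← inv_pow]
          conv_lhs => rw [hmm]
          rw [pow_succ]
          ring
      _ = aK⁻¹ ^ (m - 1) * eval α (map i (derivative f)) := by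
          rw [inv_mul_cancel₀ haK0, one_mul]
  -- assemble
  have hmono' : (pscale a f).Monic := pscale_monic ha hf
  have hdeg' : (pscale a f).natDegree = f.natDegree := pscale_natDegree ha f
  rw [polyDisc_eq_prod hmono' (by rw [hdeg']; exact hm), polyDisc_eq_prod hf hm]
  rw [hscaled_roots, Multiset.map_map]
  rw [show Multiset.map ((fun b => eval b (map i (derivative (pscale a f)))) ∘
        fun α => aK⁻¹ * α) R
      = Multiset.map (fun α => aK⁻¹ ^ (m - 1) *
          ((derivative f).map i).eval α) R from
    Multiset.map_congr rfl (fun α _ => hder α)]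
  rw [Multiset.prod_map_mul, Multiset.map_const', Multiset.prod_replicate, hcard, ← pow_mul]

end Scale
/-- If `q` is a power of `2` and `m ≥ 2` satisfies `gcd(q-1, m(m-1)) = 1`, then every
`d ∈ F_q` is the discriminant of exactly `q^(m-1)` monic polynomials of degree `m`. -/
theorem stmt2 {F : Type*} [Field F] [Fintype F] (q m : ℕ) (hq : Fintype.card F = q)
    (h2 : ∃ n : ℕ, q = 2 ^ n) (hm : 2 ≤ m) (hgcd : Nat.gcd (q - 1) (m * (m - 1)) = 1) (d : F) :
    {f : F[X] | f.Monic ∧ f.natDegree = m ∧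
        polyDisc f = algebraMap F (AlgebraicClosure F) d}.ncard = q ^ (m - 1) := by
  classical
  subst hq
  set q := Fintype.card F with hqdef
  have hq2 : 2 ≤ q := Fintype.one_lt_card
  -- characteristic 2
  haveI hch : CharP F 2 := by
    obtain ⟨n, hn⟩ := h2
    obtain ⟨k, hpp, hcard⟩ := FiniteField.card F (ringChar F)
    have hdvd : ringChar F ∣ 2 ^ n := by
      rw [← hn, hqdef, hcard]
      exact dvd_pow_self _ (by exact_mod_cast k.ne_zero)
    have : ringChar F = 2 := by
      rcases (Nat.Prime.eq_one_or_self_of_dvd Nat.prime_two _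
        (hpp.dvd_of_dvd_pow hdvd)) with h | h
      · exact absurd h hpp.ne_one
      · exact h
    exact this ▸ ringChar.charP F
  set K := AlgebraicClosure F
  set i : F →+* K := algebraMap F K with hidef
  set T : F → Set F[X] := fun e =>
    {f : F[X] | f.Monic ∧ f.natDegree = m ∧ polyDisc f = i e} with hT
  have hTfin : ∀ e : F, (T e).Finite := fun e =>
    finite_subset_degLE m _ (fun f hf => hf.2.1.le)
  -- T 0 is the non-squarefree set
  have hT0 : (T 0).ncard = q ^ (m - 1) := by
    have : T 0 = {f : F[X] | f.Monic ∧ f.natDegree = m ∧ ¬ Squarefree f} := by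
      ext f
      simp only [hT, Set.mem_setOf_eq, map_zero]
      constructor
      · rintro ⟨h1, h2', h3⟩
        exact ⟨h1, h2', (polyDisc_zero_iff h1 (h2' ▸ hm)).1 h3⟩
      · rintro ⟨h1, h2', h3⟩
        exact ⟨h1, h2', (polyDisc_zero_iff h1 (h2' ▸ hm)).2 h3⟩
    rw [this]
    exact nonsf_count m hm
  -- equidistribution over nonzero values
  have hTeq : ∀ d' e : F, d' ≠ 0 → e ≠ 0 → (T d').ncard = (T e).ncard := by
    intro d' e hd' he
    have hcop : (Nat.card Fˣ).Coprime ((m - 1) * m) := by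
      have h1 : Nat.card Fˣ = q - 1 := by
        rw [Nat.card_eq_fintype_card, Fintype.card_units, hqdef]
      rw [h1]
      show Nat.gcd (q - 1) ((m - 1) * m) = 1
      rw [mul_comm]
      exact hgcd
    obtain ⟨c, hc⟩ := (powCoprime hcop).surjective (Units.mk0 d' hd' * (Units.mk0 e he)⁻¹)
    have hcpow : (c : F) ^ ((m - 1) * m) = d' * e⁻¹ := by
      have h1 : c ^ ((m - 1) * m) = Units.mk0 d' hd' * (Units.mk0 e he)⁻¹ := by
        rw [← powCoprime_apply hcop, hc]
      have := congrArg Units.val h1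
      simpa using this
    have hc0 : (c : F) ≠ 0 := c.ne_zero
    have hkey : ∀ f ∈ T d', pscale (c : F) f ∈ T e := by
      rintro f ⟨hf, hfd, hfdisc⟩
      refine ⟨pscale_monic hc0 hf, by rw [pscale_natDegree hc0, hfd], ?_⟩
      rw [pscale_polyDisc hc0 hf (hfd ▸ hm), hfdisc, hfd]
      show ((algebraMap F (AlgebraicClosure F)) (c : F))⁻¹ ^ ((m - 1) * m) *
          (algebraMap F (AlgebraicClosure F)) d' = (algebraMap F (AlgebraicClosure F)) e
      rw [← map_inv₀, ← map_pow, ← map_mul]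
      congr 1
      rw [inv_pow, hcpow]
      field_simp
    have hinj : Set.InjOn (pscale (c : F)) (T d') := by
      intro f hf g hg h
      have h1 := congrArg (pscale ((c : F))⁻¹) h
      rwa [pscale_pscale (inv_ne_zero hc0) hc0, pscale_pscale (inv_ne_zero hc0) hc0,
        mul_inv_cancel₀ hc0, pscale_one, pscale_one] at h1
    have himg : pscale (c : F) '' (T d') = T e := by
      apply Set.Subset.antisymm
      · rintro g ⟨f, hf, rfl⟩
        exact hkey f hf
      · rintro g ⟨hg, hgd, hgdisc⟩
        refine ⟨pscale ((c : F))⁻¹ g, ?_, ?_⟩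
        · refine ⟨pscale_monic (inv_ne_zero hc0) hg, by rw [pscale_natDegree (inv_ne_zero hc0), hgd], ?_⟩
          rw [pscale_polyDisc (inv_ne_zero hc0) hg (hgd ▸ hm), hgdisc, hgd]
          show ((algebraMap F (AlgebraicClosure F)) ((c : F)⁻¹))⁻¹ ^ ((m - 1) * m) *
              (algebraMap F (AlgebraicClosure F)) e = (algebraMap F (AlgebraicClosure F)) d'
          rw [map_inv₀, inv_inv, ← map_pow, ← map_mul]
          congr 1
          rw [hcpow]
          field_simp
        · rw [pscale_pscale hc0 (inv_ne_zero hc0), inv_mul_cancel₀ hc0, pscale_one]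
    rw [← himg, Set.ncard_image_of_injOn hinj]
  -- the union over all e
  have hcover : {f : F[X] | f.Monic ∧ f.natDegree = m} = ⋃ e ∈ (Finset.univ : Finset F), T e := by
    apply Set.Subset.antisymm
    · rintro f ⟨hf, hfd⟩
      obtain ⟨c, hc⟩ := polyDisc_mem_range hf (hfd ▸ hm)
      exact Set.mem_biUnion (Finset.mem_univ c) ⟨hf, hfd, hc⟩
    · intro f hf
      simp only [Set.mem_iUnion] at hf
      obtain ⟨e, -, hfe⟩ := hf
      exact ⟨hfe.1, hfe.2.1⟩
  have hdisj : ∀ e₁ ∈ (Finset.univ : Finset F), ∀ e₂ ∈ (Finset.univ : Finset F),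
      e₁ ≠ e₂ → Disjoint (T e₁) (T e₂) := by
    intro e₁ _ e₂ _ hne
    rw [Set.disjoint_left]
    rintro f ⟨-, -, h1⟩ ⟨-, -, h2⟩
    exact hne (i.injective (h1 ▸ h2 ▸ rfl))
  have hsum : q ^ m = ∑ e : F, (T e).ncard := by
    have := ncard_biUnion' (Finset.univ : Finset F) T (fun e _ => hTfin e) hdisj
    rw [← hcover, ncard_monic] at this
    exact this
  -- split off the zero term
  have hsplit : ∑ e : F, (T e).ncard = ∑ e ∈ Finset.univ \ {(0 : F)}, (T e).ncard + (T 0).ncard := by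
    rw [Finset.sum_eq_sum_sdiff_singleton_add (Finset.mem_univ (0 : F))]
  by_cases hd : d = 0
  · rw [hd]; exact hT0
  · have hconst : ∀ e ∈ Finset.univ \ {(0 : F)}, (T e).ncard = (T d).ncard := by
      intro e he
      have he0 : e ≠ 0 := by
        rcases Finset.mem_sdiff.1 he with ⟨-, h⟩
        simpa using h
      exact hTeq e d he0 hd
    have hcard_sdiff : (Finset.univ \ {(0 : F)}).card = q - 1 := by
      rw [Finset.card_sdiff_of_subset (by simp), Finset.card_univ, Finset.card_singleton]
    rw [hsplit, Finset.sum_congr rfl hconst, Finset.sum_const, hcard_sdiff, hT0] at hsum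
    have hqm : q ^ m = (q - 1) * q ^ (m - 1) + q ^ (m - 1) := by
      have h1 : (q - 1) * q ^ (m - 1) + q ^ (m - 1) = q * q ^ (m - 1) := by
        have : q - 1 + 1 = q := by omega
        calc (q - 1) * q ^ (m - 1) + q ^ (m - 1) = (q - 1 + 1) * q ^ (m - 1) := by ring
          _ = q * q ^ (m - 1) := by rw [this]
      rw [h1, ← pow_succ']
      congr 1
      omega
    rw [smul_eq_mul] at hsum
    have h5 : (q - 1) * (T d).ncard = (q - 1) * q ^ (m - 1) := by omega
    exact Nat.eq_of_mul_eq_mul_left (by omega) h5
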